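/- Let A, B, P be strings and let 1≤i≤|A|, 1≤j≤|B|, 0≤k≤|P| with A[i]≠B[j]. Then C(i,j,k) = max(C(i−1,j,k), C(i,j−1,k)). -/

import Mathlib

open List Relation

section Defs

variable {V V1 V2 V3 α : Type*}

/-- A (directed) path: a nonempty list of vertices, consecutive ones joined by edges. -/
def IsPath (E : V → V → Prop) (p : List V) : Prop :=
  p ≠ [] ∧ p.Chain' E

/-- Paths ending at `v` (the set `P(v)`). -/
def EndsAt (E : V → V → Prop) (v : V) (p : List V) : Prop :=
  IsPath E p ∧ p.getLast? = some v

/-- A path is left-maximal if its first vertex has no in-coming edges. -/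
def LeftMax (E : V → V → Prop) (p : List V) : Prop :=
  ∀ w u, p.head? = some w → ¬ E u w

/-- A path is right-maximal if its last vertex has no out-going edges. -/
def RightMax (E : V → V → Prop) (p : List V) : Prop :=
  ∀ w u, p.getLast? = some w → ¬ E w u

/-- `Subseq(ℓ(P(v)))`: subsequences of label strings of paths ending at `v`. -/
def SubseqAt (E : V → V → Prop) (ℓ : V → α) (v : V) : Set (List α) :=
  {z | ∃ p, EndsAt E v p ∧ z.Sublist (p.map ℓ)}

/-- `Subseq(ℓ(LMP(v)))`: subsequences of label strings of left-maximal paths ending at `v`. -/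
def SubseqLM (E : V → V → Prop) (ℓ : V → α) (v : V) : Set (List α) :=
  {z | ∃ p, EndsAt E v p ∧ LeftMax E p ∧ z.Sublist (p.map ℓ)}

/-- `Subseq(G)`: subsequences of label strings of all paths of `G`. -/
def SubseqG (E : V → V → Prop) (ℓ : V → α) : Set (List α) :=
  {z | ∃ p, IsPath E p ∧ z.Sublist (p.map ℓ)}

/-- A graph is acyclic if no vertex lies on a nonempty cycle. -/
def Acyclic (E : V → V → Prop) : Prop :=
  ∀ v, ¬ Relation.TransGen E v v

/-- The set `S_IC(v1,v2,v3)`. -/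
def SIC (E1 : V1 → V1 → Prop) (ℓ1 : V1 → α) (E2 : V2 → V2 → Prop) (ℓ2 : V2 → α)
    (E3 : V3 → V3 → Prop) (ℓ3 : V3 → α) (v1 : V1) (v2 : V2) (v3 : V3) :
    Set (List α) :=
  {z | (∃ q, EndsAt E3 v3 q ∧ LeftMax E3 q ∧ (q.map ℓ3).Sublist z) ∧
       z ∈ SubseqAt E1 ℓ1 v1 ∧ z ∈ SubseqAt E2 ℓ2 v2}

/-- Maximum length of a string in `S`, with `⊥` (= −∞) for `S = ∅`. -/
noncomputable def maxLen (S : Set (List α)) : WithBot ℕ :=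
  sSup ((fun z : List α => (z.length : WithBot ℕ)) '' S)

/-- `L(v1,v2)`: the maximum length of a common subsequence (as a natural number). -/
noncomputable def Lval (E1 : V1 → V1 → Prop) (ℓ1 : V1 → α)
    (E2 : V2 → V2 → Prop) (ℓ2 : V2 → α) (v1 : V1) (v2 : V2) : ℕ :=
  sSup {n | ∃ z ∈ SubseqAt E1 ℓ1 v1 ∩ SubseqAt E2 ℓ2 v2, n = z.length}

/-- `D(v1,v2,v3)`: the maximum length of a string in `S_IC(v1,v2,v3)`, `−∞` if empty. -/
noncomputable def Dval (E1 : V1 → V1 → Prop) (ℓ1 : V1 → α) (E2 : V2 → V2 → Prop) (ℓ2 : V2 → α)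
    (E3 : V3 → V3 → Prop) (ℓ3 : V3 → α) (v1 : V1) (v2 : V2) (v3 : V3) : WithBot ℕ :=
  maxLen (SIC E1 ℓ1 E2 ℓ2 E3 ℓ3 v1 v2 v3)

end Defs

/-- `C(i,j,k)`: the maximum length (`⊥` = −∞ if none exists) of a string `z` such
that `P[1..k]` is a subsequence of `z` and `z` is a common subsequence of
`A[1..i]` and `B[1..j]`. -/
noncomputable def Cval {α : Type*} (A B P : List α) (i j k : ℕ) : WithBot ℕ :=
  maxLen {z | (P.take k).Sublist z ∧ z.Sublist (A.take i) ∧ z.Sublist (B.take j)}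


open List in
private lemma snoc_key {α : Type*} {a b : α} (hab : a ≠ b) {z l m : List α}
    (h1 : z <+ l ++ [a]) (h2 : z <+ m ++ [b]) : z <+ l ∨ z <+ m := by
  rw [sublist_append_iff] at h1 h2
  obtain ⟨z1, z2, rfl, hz1, hz2⟩ := h1
  obtain ⟨w1, w2, heq, hw1, hw2⟩ := h2
  rcases sublist_singleton.1 hz2 with rfl | rfl
  · left; simpa using hz1
  rcases sublist_singleton.1 hw2 with rfl | rfl
  · right
    rw [append_nil] at heq
    rw [heq]; exact hw1
  · exfalso
    apply hab
    have := (List.append_inj' heq rfl).2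
    simpa using this

private lemma maxLen_bot : maxLen (∅ : Set (List ℕ)) = ⊥ := by
  simp [maxLen]

private lemma maxLen_union {α : Type*} {S T : Set (List α)}
    (hS : BddAbove ((fun z : List α => (z.length : WithBot ℕ)) '' S))
    (hT : BddAbove ((fun z : List α => (z.length : WithBot ℕ)) '' T)) :
    maxLen (S ∪ T) = max (maxLen S) (maxLen T) := by
  unfold maxLen
  rw [Set.image_union]
  set f : List α → WithBot ℕ := fun z => (z.length : WithBot ℕ)
  rcases (f '' S).eq_empty_or_nonempty with hSe | hSn
  · rw [hSe, Set.empty_union, WithBot.sSup_empty]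
    rw [max_eq_right bot_le]
  rcases (f '' T).eq_empty_or_nonempty with hTe | hTn
  · rw [hTe, Set.union_empty, WithBot.sSup_empty]
    rw [max_eq_left bot_le]
  rw [csSup_union hS hSn hT hTn]

/-- If `1 ≤ i ≤ |A|`, `1 ≤ j ≤ |B|`, `0 ≤ k ≤ |P|` and
`A[i] ≠ B[j]`, then `C(i,j,k) = max(C(i−1,j,k), C(i,j−1,k))`. -/
theorem stmt5 {α : Type*} (A B P : List α) (i j k : ℕ)
    (hi1 : 1 ≤ i) (hi2 : i ≤ A.length) (hj1 : 1 ≤ j) (hj2 : j ≤ B.length)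
    (hk2 : k ≤ P.length)
    (hAB : A.get ⟨i - 1, by omega⟩ ≠ B.get ⟨j - 1, by omega⟩) :
    Cval A B P i j k = max (Cval A B P (i - 1) j k) (Cval A B P i (j - 1) k) := by
  have hA : A.take i = A.take (i-1) ++ [A.get ⟨i - 1, by omega⟩] := by
    have h1 : i - 1 + 1 = i := by omega
    conv_lhs => rw [← h1, List.take_succ]
    congr 1
    rw [List.getElem?_eq_getElem (by omega)]
    rfl
  have hB : B.take j = B.take (j-1) ++ [B.get ⟨j - 1, by omega⟩] := by
    have h1 : j - 1 + 1 = j := by omega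
    conv_lhs => rw [← h1, List.take_succ]
    congr 1
    rw [List.getElem?_eq_getElem (by omega)]
    rfl
  have hset : {z : List α | (P.take k).Sublist z ∧ z.Sublist (A.take i) ∧ z.Sublist (B.take j)}
      = {z : List α | (P.take k).Sublist z ∧ z.Sublist (A.take (i-1)) ∧ z.Sublist (B.take j)}
      ∪ {z : List α | (P.take k).Sublist z ∧ z.Sublist (A.take i) ∧ z.Sublist (B.take (j-1))} := by
    ext z
    simp only [Set.mem_setOf_eq, Set.mem_union]
    constructor
    · rintro ⟨hp, ha, hb⟩
      rcases snoc_key hAB (hA ▸ ha) (hB ▸ hb) with h | h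
      · exact Or.inl ⟨hp, h, hb⟩
      · exact Or.inr ⟨hp, ha, h⟩
    · rintro (⟨hp, ha, hb⟩ | ⟨hp, ha, hb⟩)
      · exact ⟨hp, ha.trans (by rw [hA]; exact List.sublist_append_left _ _), hb⟩
      · exact ⟨hp, ha, hb.trans (by rw [hB]; exact List.sublist_append_left _ _)⟩
  have bdd : ∀ (S : Set (List α)), (∀ z ∈ S, z.length ≤ A.length) →
      BddAbove ((fun z : List α => (z.length : WithBot ℕ)) '' S) := by
    intro S hS
    refine ⟨(A.length : WithBot ℕ), ?_⟩
    rintro x ⟨z, hz, rfl⟩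
    show (z.length : WithBot ℕ) ≤ (A.length : WithBot ℕ)
    exact_mod_cast hS z hz
  have b1 : ∀ m n : ℕ, BddAbove ((fun z : List α => (z.length : WithBot ℕ)) ''
      {z : List α | (P.take k).Sublist z ∧ z.Sublist (A.take m) ∧ z.Sublist (B.take n)}) := by
    intro m n
    apply bdd
    rintro z ⟨-, hz, -⟩
    calc z.length ≤ (A.take m).length := hz.length_le
    _ ≤ A.length := by simp
  show maxLen _ = max (maxLen _) (maxLen _)
  rw [hset]
  exact maxLen_union (b1 (i-1) j) (b1 i (j-1))
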